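/- Let {ℓ_n} be a strictly increasing sequence of positive integers with 3^{ℓ_n − ℓ_{n−1}} > 2^{n+1} for all n ≥ 1. Then the Puiseux monoid M generated by A = { a_n, b_n : n ∈ ℕ }, where a_n = (2^n 3^{ℓ_n} − 1)/(2^{2n} 3^{ℓ_n}) and b_n = (2^n 3^{ℓ_n} + 1)/(2^{2n} 3^{ℓ_n}), is atomic with set of atoms exactly A. -/

import Mathlib

def IsAddAtom {M : Type*} [AddCommMonoid M] (a : M) : Prop :=
  ¬ IsAddUnit a ∧ ∀ x y : M, a = x + y → IsAddUnit x ∨ IsAddUnit y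

def AddAtomic (M : Type*) [AddCommMonoid M] : Prop :=
  ∀ x : M, ¬ IsAddUnit x → ∃ l : Multiset M, (∀ a ∈ l, IsAddAtom a) ∧ l.sum = x

namespace AtomsAux


def eps (ℓ : ℕ → ℕ) (k : ℕ) : ℚ := 1 / (2 ^ (2 * k) * 3 ^ (ℓ k))

def aq (ℓ : ℕ → ℕ) (k : ℕ) : ℚ := 1 / 2 ^ k - eps ℓ k

def bq (ℓ : ℕ → ℕ) (k : ℕ) : ℚ := 1 / 2 ^ k + eps ℓ k

def Aset (ℓ : ℕ → ℕ) : Set ℚ := {q : ℚ | ∃ n : ℕ, 1 ≤ n ∧ (q = aq ℓ n ∨ q = bq ℓ n)}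

lemma eps_pos (ℓ : ℕ → ℕ) (k : ℕ) : 0 < eps ℓ k := by
  unfold eps; positivity

lemma eps_lt (ℓ : ℕ → ℕ) (hpos : ∀ n, 0 < ℓ n) (k : ℕ) (hk : 1 ≤ k) :
    eps ℓ k < 1 / 2 ^ (k + 1) := by
  unfold eps
  rw [div_lt_div_iff₀ (by positivity) (by positivity)]
  have h1 : (2 : ℚ) ^ (k + 1) < 2 ^ (2 * k) * 3 ^ (ℓ k) := by
    have h2 : (2 : ℚ) ^ (k + 1) ≤ 2 ^ (2 * k) := by
      apply pow_le_pow_right₀ (by norm_num)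
      omega
    have h3 : (1 : ℚ) < 3 ^ (ℓ k) := by
      apply one_lt_pow₀ (by norm_num)
      exact (hpos k).ne'
    nlinarith [pow_pos (show (0:ℚ) < 2 by norm_num) (2 * k)]
  linarith

lemma aq_ge (ℓ : ℕ → ℕ) (hpos : ∀ n, 0 < ℓ n) (k : ℕ) (hk : 1 ≤ k) :
    1 / 2 ^ (k + 1) ≤ aq ℓ k := by
  unfold aq
  have h1 := eps_lt ℓ hpos k hk
  have h3 : (1:ℚ) / 2 ^ k = 1 / 2^(k+1) + 1/2^(k+1) := by
    rw [pow_succ]; ring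
  linarith

lemma aq_pos (ℓ : ℕ → ℕ) (hpos : ∀ n, 0 < ℓ n) (k : ℕ) (hk : 1 ≤ k) :
    0 < aq ℓ k := by
  have h1 := aq_ge ℓ hpos k hk
  have h2 : (0:ℚ) < 1 / 2 ^ (k+1) := by positivity
  linarith

lemma bq_pos (ℓ : ℕ → ℕ) (hpos : ∀ n, 0 < ℓ n) (k : ℕ) (hk : 1 ≤ k) :
    0 < bq ℓ k := by
  have h1 := aq_pos ℓ hpos k hk
  have h2 := eps_pos ℓ k
  unfold aq at h1; unfold bq; linarith

open Finset in
lemma core (ℓ : ℕ → ℕ) (hmono : StrictMono ℓ) (hpos : ∀ n, 0 < ℓ n)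
    (hgrow : ∀ n ≥ 1, (2:ℕ)^(n+1) < 3^(ℓ n - ℓ (n-1)))
    (n N : ℕ) (hn : 1 ≤ n) (hnN : n ≤ N)
    (c d : ℕ → ℕ) (hc0 : c 0 = 0) (hd0 : d 0 = 0)
    (σ : ℤ) (hσ : σ = 1 ∨ σ = -1)
    (heq : ∑ k ∈ range (N+1), ((c k : ℚ) * aq ℓ k + (d k : ℚ) * bq ℓ k)
      = 1 / 2 ^ n + (σ : ℚ) * eps ℓ n) :
    ∑ k ∈ range (N+1), (c k + d k) = 1 := by
  set g : ℕ → ℤ := fun k => ((d k : ℤ) - (c k : ℤ)) - (if k = n then σ else 0) with hgdef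
  -- cast of g
  have hg_cast : ∀ k, (g k : ℚ) = ((d k : ℚ) - c k) - (if k = n then (σ:ℚ) else 0) := by
    intro k
    by_cases h : k = n <;> simp only [hgdef, h, if_pos, if_neg, ite_true, ite_false] <;> push_cast <;> ring
  -- split the sum
  have hsplit : ∑ k ∈ range (N+1), (((c k : ℚ) + d k)/2^k)
      + ∑ k ∈ range (N+1), (((d k:ℚ) - c k) * eps ℓ k) = 1/2^n + (σ:ℚ) * eps ℓ n := by
    rw [← Finset.sum_add_distrib, ← heq]
    exact Finset.sum_congr rfl (fun k _ => by unfold aq bq; ring)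
  have hite : ∑ k ∈ range (N+1), ((if k = n then (σ:ℚ) else 0) * eps ℓ k) = (σ:ℚ) * eps ℓ n := by
    rw [Finset.sum_eq_single_of_mem n (mem_range.2 (by omega))]
    · rw [if_pos rfl]
    · intro j _ hjn
      rw [if_neg hjn, zero_mul]
  have heps : ∑ k ∈ range (N+1), (g k : ℚ) * eps ℓ k
      = 1/2^n - ∑ k ∈ range (N+1), (((c k:ℚ) + d k)/2^k) := by
    have h2 : ∑ k ∈ range (N+1), (g k : ℚ) * eps ℓ k
        = ∑ k ∈ range (N+1), (((d k:ℚ) - c k) * eps ℓ k)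
          - ∑ k ∈ range (N+1), ((if k = n then (σ:ℚ) else 0) * eps ℓ k) := by
      rw [← Finset.sum_sub_distrib]
      exact Finset.sum_congr rfl fun k _ => by rw [hg_cast k]; ring
    rw [h2, hite]
    linarith [hsplit]
  -- total bound
  have total_lt : 1/2^n + (σ:ℚ) * eps ℓ n < 1 := by
    have h1 := eps_lt ℓ hpos n hn
    have h2 := eps_pos ℓ n
    have hσ' : (σ:ℚ) * eps ℓ n ≤ eps ℓ n := by
      rcases hσ with h|h <;> rw [h] <;> push_cast <;> linarith
    have h3 : (1:ℚ)/2^n ≤ 1/2 := by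
      apply div_le_div_of_nonneg_left (by norm_num) (by positivity)
      calc (2:ℚ) = 2^1 := by norm_num
      _ ≤ 2^n := by apply pow_le_pow_right₀ (by norm_num); omega
    have h4 : (1:ℚ)/2^(n+1) ≤ 1/4 := by
      apply div_le_div_of_nonneg_left (by norm_num) (by positivity)
      calc (4:ℚ) = 2^2 := by norm_num
      _ ≤ 2^(n+1) := by apply pow_le_pow_right₀ (by norm_num); omega
    linarith
  have term_nonneg : ∀ k ∈ range (N+1), 0 ≤ (c k : ℚ) * aq ℓ k + (d k : ℚ) * bq ℓ k := by
    intro k _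
    rcases Nat.eq_zero_or_pos k with rfl | hk
    · simp [hc0, hd0]
    · have h1 := aq_pos ℓ hpos k hk
      have h2 := bq_pos ℓ hpos k hk
      positivity
  have hsbound : ∀ j, 1 ≤ j → j ≤ N → c j + d j < 2^(j+1) := by
    intro j hj hjN
    have hmem : j ∈ range (N+1) := mem_range.2 (by omega)
    have hle : (c j : ℚ) * aq ℓ j + (d j : ℚ) * bq ℓ j ≤ 1/2^n + (σ:ℚ) * eps ℓ n := by
      rw [← heq]
      exact Finset.single_le_sum term_nonneg hmem
    have haqj := aq_ge ℓ hpos j hj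
    have hbqj : 1/2^(j+1) ≤ bq ℓ j := by
      refine le_trans haqj ?_
      unfold aq bq
      have := eps_pos ℓ j
      linarith
    have hcnn : (0:ℚ) ≤ (c j : ℚ) := Nat.cast_nonneg _
    have hdnn : (0:ℚ) ≤ (d j : ℚ) := Nat.cast_nonneg _
    have h1 : ((c j : ℚ) + d j) * (1/2^(j+1)) ≤ 1/2^n + (σ:ℚ) * eps ℓ n := by
      calc ((c j:ℚ) + d j) * (1/2^(j+1))
          ≤ (c j:ℚ) * aq ℓ j + (d j:ℚ) * bq ℓ j := by nlinarith
      _ ≤ _ := hle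
    have h2 : ((c j : ℚ) + d j) < 2^(j+1) := by
      by_contra hcon
      push_neg at hcon
      have hp : (0:ℚ) < 2^(j+1) := by positivity
      have : (1:ℚ) ≤ ((c j:ℚ) + d j) * (1/2^(j+1)) := by
        rw [mul_one_div, le_div_iff₀ hp]
        linarith
      linarith
    have h3 : ((c j + d j : ℕ) : ℚ) < ((2^(j+1) : ℕ) : ℚ) := by push_cast; linarith
    exact_mod_cast h3
  have hg0 : g 0 = 0 := by
    simp only [hgdef, hc0, hd0]
    rw [if_neg (by omega)]
    simp
  -- downward induction
  have key : ∀ i, ∀ k, k ≤ N → N < k + i → g k = 0 := by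
    intro i
    induction i with
    | zero => intro k h1 h2; omega
    | succ i ih =>
      intro k hkN hNlt
      by_cases hcase : N < k + i
      · exact ih k hkN hcase
      have hki : k + i = N := by omega
      rcases Nat.eq_zero_or_pos k with rfl | hk1
      · exact hg0
      have ihz : ∀ j, k < j → j ≤ N → g j = 0 := fun j hj hjN => ih j hjN (by omega)
      have htrunc : ∑ j ∈ range (k+1), (g j : ℚ) * eps ℓ j
          = ∑ j ∈ range (N+1), (g j : ℚ) * eps ℓ j := by
        apply Finset.sum_subset
        · exact Finset.range_subset_range.2 (by omega)
        · intro j hjN hjk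
          have h1 : g j = 0 := ihz j (by simp only [mem_range] at hjk; omega)
            (by simp only [mem_range] at hjN; omega)
          rw [h1]; simp
      set T := 2*N + n with hT
      set X : ℤ := ∑ j ∈ range (k+1), g j * 2^(T - 2*j) * 3^(ℓ k - ℓ j) with hX
      set Z : ℤ := 2^(T-n) - ∑ j ∈ range (N+1), ((c j + d j : ℕ) : ℤ) * 2^(T - j) with hZ
      have hXQ : ((X : ℤ) : ℚ) = 2^T * 3^(ℓ k) * ∑ j ∈ range (k+1), (g j : ℚ) * eps ℓ j := by
        rw [hX, Finset.mul_sum]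
        push_cast
        apply Finset.sum_congr rfl
        intro j hj
        have hjk : j ≤ k := by simp only [mem_range] at hj; omega
        have h2 : (2:ℚ)^(T - 2*j) * 2^(2*j) = 2^T := by
          rw [← pow_add]; congr 1; omega
        have h3 : (3:ℚ)^(ℓ k - ℓ j) * 3^(ℓ j) = 3^(ℓ k) := by
          rw [← pow_add]; congr 1
          have := hmono.monotone hjk
          omega
        have hne1 : (2:ℚ)^(2*j) ≠ 0 := by positivity
        have hne2 : (3:ℚ)^(ℓ j) ≠ 0 := by positivity
        simp only [eps]
        rw [← h2, ← h3]
        field_simp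
      have hZQ : ((Z : ℤ) : ℚ) = 2^T * (1/2^n - ∑ j ∈ range (N+1), ((c j : ℚ) + d j)/2^j) := by
        rw [hZ]
        push_cast
        rw [mul_sub, Finset.mul_sum]
        congr 1
        · rw [mul_one_div, eq_div_iff (by positivity), ← pow_add]
          congr 1; omega
        · apply Finset.sum_congr rfl
          intro j hj
          have hjN : j ≤ N := by simp only [mem_range] at hj; omega
          have h2 : (2:ℚ)^(T-j) * 2^j = 2^T := by
            rw [← pow_add]; congr 1; omega
          field_simp
          linear_combination ((c j:ℚ) + d j) * h2
      have hXZ : X = 3^(ℓ k) * Z := by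
        have hq : ((X:ℤ):ℚ) = ((3^(ℓ k) * Z : ℤ) : ℚ) := by
          have hc : ((3^(ℓ k) * Z : ℤ) : ℚ) = (3:ℚ)^(ℓ k) * ((Z:ℤ):ℚ) := by push_cast; ring
          rw [hc, hZQ, hXQ, htrunc, heps]
          ring
        exact_mod_cast hq
      set m : ℤ := 3^(ℓ k - ℓ (k-1)) with hm
      have hm_dvd_X : m ∣ X := by
        rw [hXZ]
        exact dvd_mul_of_dvd_left (pow_dvd_pow 3 (by omega)) Z
      have hsplitX : X = (∑ j ∈ range k, g j * 2^(T - 2*j) * 3^(ℓ k - ℓ j))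
          + g k * 2^(T-2*k) * 3^(ℓ k - ℓ k) := Finset.sum_range_succ _ k
      have hm_dvd_rest : m ∣ ∑ j ∈ range k, g j * 2^(T - 2*j) * 3^(ℓ k - ℓ j) := by
        apply Finset.dvd_sum
        intro j hj
        have hjk : j < k := mem_range.1 hj
        have hle : ℓ k - ℓ (k-1) ≤ ℓ k - ℓ j := by
          have h1 : ℓ j ≤ ℓ (k-1) := hmono.monotone (by omega)
          omega
        exact Dvd.dvd.mul_left (pow_dvd_pow 3 hle) _
      have hm_dvd_gk2 : m ∣ g k * 2^(T - 2*k) := by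
        have h1 : g k * 2^(T-2*k) = X - ∑ j ∈ range k, g j * 2^(T - 2*j) * 3^(ℓ k - ℓ j) := by
          rw [hsplitX, Nat.sub_self, pow_zero]; ring
        rw [h1]
        exact dvd_sub hm_dvd_X hm_dvd_rest
      have hcop : IsCoprime m ((2:ℤ)^(T - 2*k)) := by
        apply IsCoprime.pow
        rw [Int.isCoprime_iff_gcd_eq_one]
        decide
      have hm_dvd_gk : m ∣ g k := hcop.dvd_of_dvd_mul_right hm_dvd_gk2
      have habs : |g k| ≤ (c k : ℤ) + d k + 1 := by
        have h1 : |(d k : ℤ) - c k| ≤ (c k : ℤ) + d k := by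
          rw [abs_le]; constructor <;> omega
      
        have h2 : |(if k = n then σ else 0 : ℤ)| ≤ 1 := by
          rcases hσ with h|h <;> rw [h] <;> split <;> simp
        calc |g k| ≤ |(d k : ℤ) - c k| + |(if k = n then σ else 0 : ℤ)| := by
              rw [hgdef]
              exact abs_sub _ _
        _ ≤ (c k : ℤ) + d k + 1 := by linarith
      have hltm : (c k : ℤ) + d k + 1 < m := by
        have h1 := hsbound k hk1 hkN
        have h2 := hgrow k hk1
        have h3 : (c k + d k) + 1 ≤ 2^(k+1) := by omega
        calc (c k : ℤ) + d k + 1 ≤ 2^(k+1) := by exact_mod_cast h3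
        _ < m := by rw [hm]; exact_mod_cast h2
      by_contra hgk
      have hpos' : 0 < |g k| := abs_pos.2 hgk
      have hmle := Int.le_of_dvd hpos' ((dvd_abs m (g k)).2 hm_dvd_gk)
      linarith
  have gzero : ∀ j, j ≤ N → g j = 0 := fun j hj => key (N+1) j hj (by omega)
  -- step 2
  have hzero_sum : ∑ j ∈ range (N+1), (g j : ℚ) * eps ℓ j = 0 :=
    Finset.sum_eq_zero fun j hj => by
      rw [gzero j (by simp only [mem_range] at hj; omega)]; simp
  have hsum2 : ∑ j ∈ range (N+1), ((c j:ℚ) + d j)/2^j = 1/2^n := by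
    rw [hzero_sum] at heps
    linarith
  have hsn : 1 ≤ c n + d n := by
    by_contra h
    push_neg at h
    have hc : c n = 0 := by omega
    have hd : d n = 0 := by omega
    have h2 := gzero n hnN
    rw [hgdef] at h2
    simp only [hc, hd, if_pos rfl] at h2
    push_cast at h2
    rcases hσ with h|h <;> omega
  have hn_mem : n ∈ range (N+1) := mem_range.2 (by omega)
  have herase : ∑ j ∈ (range (N+1)).erase n, ((c j:ℚ)+d j)/2^j + ((c n:ℚ)+d n)/2^n = 1/2^n := by
    rw [Finset.sum_erase_add _ _ hn_mem]
    exact hsum2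
  have hterm_nonneg' : ∀ j ∈ (range (N+1)).erase n, 0 ≤ ((c j:ℚ)+d j)/2^j := by
    intro j _; positivity
  have hsnn : (1:ℚ) ≤ (c n:ℚ) + d n := by exact_mod_cast hsn
  have h1n : (1:ℚ)/2^n ≤ ((c n:ℚ)+d n)/2^n := by gcongr
  have hsum_erase_zero : ∑ j ∈ (range (N+1)).erase n, ((c j:ℚ)+d j)/2^j = 0 := by
    have hge : 0 ≤ ∑ j ∈ (range (N+1)).erase n, ((c j:ℚ)+d j)/2^j :=
      Finset.sum_nonneg hterm_nonneg'
    linarith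
  have hsncount : c n + d n = 1 := by
    have h2 : ((c n:ℚ)+d n)/2^n = 1/2^n := by linarith
    have h3 : ((c n:ℚ)+d n) = 1 := by
      field_simp at h2
      exact_mod_cast h2
    exact_mod_cast h3
  have hall0 : ∀ j ∈ (range (N+1)).erase n, c j + d j = 0 := by
    intro j hj
    have h := (Finset.sum_eq_zero_iff_of_nonneg hterm_nonneg').1 hsum_erase_zero j hj
    have h2 : ((c j:ℚ) + d j) = 0 := by
      have hp : ((2:ℚ)^j) ≠ 0 := by positivity
      field_simp at h
      exact_mod_cast h
    exact_mod_cast h2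
  rw [← Finset.sum_erase_add _ _ hn_mem, Finset.sum_eq_zero hall0, hsncount]


open Finset

/-- Representation predicate -/
def Rep (ℓ : ℕ → ℕ) (q : ℚ) : Prop :=
  ∃ N : ℕ, ∃ c d : ℕ → ℕ, c 0 = 0 ∧ d 0 = 0 ∧ (∀ k, N < k → c k = 0 ∧ d k = 0) ∧
    q = ∑ k ∈ Finset.range (N+1), ((c k : ℚ) * aq ℓ k + (d k : ℚ) * bq ℓ k)

lemma rep_pad (ℓ : ℕ → ℕ) {N N' : ℕ} (h : N ≤ N') {c d : ℕ → ℕ}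
    (hcd : ∀ k, N < k → c k = 0 ∧ d k = 0) :
    ∑ k ∈ range (N'+1), ((c k : ℚ) * aq ℓ k + (d k : ℚ) * bq ℓ k)
      = ∑ k ∈ range (N+1), ((c k : ℚ) * aq ℓ k + (d k : ℚ) * bq ℓ k) := by
  refine (Finset.sum_subset (Finset.range_subset_range.2 (by omega)) ?_).symm
  intro x hx hnx
  simp only [mem_range] at hx hnx
  obtain ⟨h1, h2⟩ := hcd x (by omega)
  simp [h1, h2]

lemma mem_rep (ℓ : ℕ → ℕ) (q : ℚ) (h : q ∈ AddSubmonoid.closure (Aset ℓ)) : Rep ℓ q := by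
  induction h using AddSubmonoid.closure_induction with
  | mem x hx =>
    obtain ⟨n, hn, hx⟩ := hx
    refine ⟨n, (fun k => if k = n ∧ x = aq ℓ n then 1 else 0),
      (fun k => if k = n ∧ x = bq ℓ n then 1 else 0), ?_, ?_, ?_, ?_⟩
    · simp only [ite_eq_right_iff]; intro h'; omega
    · simp only [ite_eq_right_iff]; intro h'; omega
    · intro k hk
      constructor <;> · simp only [ite_eq_right_iff]; intro h'; omega
    · rw [Finset.sum_eq_single_of_mem n (mem_range.2 (by omega))]
      · rcases hx with rfl | rfl
        · have : ¬ (aq ℓ n = bq ℓ n) := by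
            have := eps_pos ℓ n
            unfold aq bq; intro h'; linarith [h']
          simp [this]
        · by_cases hab : bq ℓ n = aq ℓ n
          · exfalso
            have := eps_pos ℓ n
            unfold aq bq at hab; linarith [hab]
          · simp [hab]
      · intro j _ hjn
        simp [hjn]
  | zero => exact ⟨0, (fun _ => 0), (fun _ => 0), rfl, rfl, fun _ _ => ⟨rfl, rfl⟩, by simp⟩
  | add x y hx hy ihx ihy =>
    obtain ⟨N1, c1, d1, hc1, hd1, hs1, he1⟩ := ihx
    obtain ⟨N2, c2, d2, hc2, hd2, hs2, he2⟩ := ihy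
    refine ⟨max N1 N2, (fun k => c1 k + c2 k), (fun k => d1 k + d2 k),
      by simp [hc1, hc2], by simp [hd1, hd2], ?_, ?_⟩
    · intro k hk
      obtain ⟨h1, h2⟩ := hs1 k (by omega)
      obtain ⟨h3, h4⟩ := hs2 k (by omega)
      simp [h1, h2, h3, h4]
    · have hsplit : ∑ k ∈ range (max N1 N2 + 1),
          (((c1 k + c2 k : ℕ) : ℚ) * aq ℓ k + ((d1 k + d2 k : ℕ) : ℚ) * bq ℓ k)
          = ∑ k ∈ range (max N1 N2 + 1), ((c1 k : ℚ) * aq ℓ k + (d1 k : ℚ) * bq ℓ k)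
            + ∑ k ∈ range (max N1 N2 + 1), ((c2 k : ℚ) * aq ℓ k + (d2 k : ℚ) * bq ℓ k) := by
        rw [← Finset.sum_add_distrib]
        exact Finset.sum_congr rfl fun k _ => by push_cast; ring
      rw [hsplit, rep_pad ℓ (le_max_left N1 N2) hs1, rep_pad ℓ (le_max_right N1 N2) hs2,
        ← he1, ← he2]

lemma rep_mem (ℓ : ℕ → ℕ) (N : ℕ) (c d : ℕ → ℕ) (hc0 : c 0 = 0) (hd0 : d 0 = 0) :
    ∑ k ∈ range (N+1), ((c k : ℚ) * aq ℓ k + (d k : ℚ) * bq ℓ k) ∈ AddSubmonoid.closure (Aset ℓ) := by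
  apply AddSubmonoid.sum_mem
  intro k _
  rcases Nat.eq_zero_or_pos k with rfl | hk
  · simp only [hc0, hd0, Nat.cast_zero, zero_mul, add_zero]
    exact zero_mem _
  · apply AddSubmonoid.add_mem
    · have h1 : (c k : ℚ) * aq ℓ k = c k • aq ℓ k := by rw [nsmul_eq_mul]
      rw [h1]
      exact nsmul_mem (AddSubmonoid.subset_closure (show aq ℓ k ∈ Aset ℓ from ⟨k, hk, Or.inl rfl⟩)) _
    · have h1 : (d k : ℚ) * bq ℓ k = d k • bq ℓ k := by rw [nsmul_eq_mul]
      rw [h1]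
      exact nsmul_mem (AddSubmonoid.subset_closure (show bq ℓ k ∈ Aset ℓ from ⟨k, hk, Or.inr rfl⟩)) _

lemma mem_nonneg (ℓ : ℕ → ℕ) (hpos : ∀ n, 0 < ℓ n) (q : ℚ) (h : q ∈ AddSubmonoid.closure (Aset ℓ)) :
    0 ≤ q := by
  induction h using AddSubmonoid.closure_induction with
  | mem x hx =>
    obtain ⟨n, hn, hx⟩ := hx
    rcases hx with rfl | rfl
    · exact (aq_pos ℓ hpos n hn).le
    · exact (bq_pos ℓ hpos n hn).le
  | zero => exact le_refl _
  | add x y hx hy ihx ihy => linarith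

lemma unit_iff (ℓ : ℕ → ℕ) (hpos : ∀ n, 0 < ℓ n) (x : AddSubmonoid.closure (Aset ℓ)) :
    IsAddUnit x ↔ (x : ℚ) = 0 := by
  constructor
  · intro h
    obtain ⟨y, hy, -⟩ := isAddUnit_iff_exists.1 h
    have h1 : (x : ℚ) + (y : ℚ) = 0 := by simpa using congrArg Subtype.val hy
    have h2 := mem_nonneg ℓ hpos x x.2
    have h3 := mem_nonneg ℓ hpos y y.2
    linarith
  · intro h
    have : x = 0 := Subtype.ext h
    rw [this]
    exact isAddUnit_zero



lemma count_zero_sum_zero (ℓ : ℕ → ℕ) (N : ℕ) (c d : ℕ → ℕ)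
    (h : ∑ k ∈ range (N+1), (c k + d k) = 0) :
    ∑ k ∈ range (N+1), ((c k : ℚ) * aq ℓ k + (d k : ℚ) * bq ℓ k) = 0 := by
  apply Finset.sum_eq_zero
  intro k hk
  have h1 : c k + d k = 0 := Finset.sum_eq_zero_iff.1 h k hk
  have hc : c k = 0 := by omega
  have hd : d k = 0 := by omega
  simp [hc, hd]

lemma no_split (ℓ : ℕ → ℕ) (hmono : StrictMono ℓ) (hpos : ∀ n, 0 < ℓ n)
    (hgrow : ∀ n ≥ 1, (2:ℕ)^(n+1) < 3^(ℓ n - ℓ (n-1)))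
    (n : ℕ) (hn : 1 ≤ n) (σ : ℤ) (hσ : σ = 1 ∨ σ = -1) (x y : ℚ)
    (hx : Rep ℓ x) (hy : Rep ℓ y)
    (hxy : x + y = 1 / 2 ^ n + (σ : ℚ) * eps ℓ n) : x = 0 ∨ y = 0 := by
  obtain ⟨N1, c1, d1, hc1, hd1, hs1, he1⟩ := hx
  obtain ⟨N2, c2, d2, hc2, hd2, hs2, he2⟩ := hy
  set N := max (max N1 N2) n with hN
  have h1 : x = ∑ k ∈ range (N+1), ((c1 k : ℚ) * aq ℓ k + (d1 k : ℚ) * bq ℓ k) := by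
    rw [he1]; exact (rep_pad ℓ (by omega) hs1).symm
  have h2 : y = ∑ k ∈ range (N+1), ((c2 k : ℚ) * aq ℓ k + (d2 k : ℚ) * bq ℓ k) := by
    rw [he2]; exact (rep_pad ℓ (by omega) hs2).symm
  have heq : ∑ k ∈ range (N+1), (((c1 k + c2 k : ℕ) : ℚ) * aq ℓ k + ((d1 k + d2 k : ℕ) : ℚ) * bq ℓ k)
      = 1 / 2 ^ n + (σ : ℚ) * eps ℓ n := by
    rw [← hxy, h1, h2, ← Finset.sum_add_distrib]
    exact Finset.sum_congr rfl fun k _ => by push_cast; ring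
  have hcore := core ℓ hmono hpos hgrow n N hn (by omega)
    (fun k => c1 k + c2 k) (fun k => d1 k + d2 k) (by simp [hc1, hc2]) (by simp [hd1, hd2]) σ hσ heq
  have hsplitN : ∑ k ∈ range (N+1), ((c1 k + c2 k) + (d1 k + d2 k))
      = ∑ k ∈ range (N+1), (c1 k + d1 k) + ∑ k ∈ range (N+1), (c2 k + d2 k) := by
    rw [← Finset.sum_add_distrib]
    exact Finset.sum_congr rfl fun k _ => by omega
  rw [hsplitN] at hcore
  rcases Nat.eq_zero_or_pos (∑ k ∈ range (N+1), (c1 k + d1 k)) with hz | hp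
  · left
    rw [h1]
    exact count_zero_sum_zero ℓ N c1 d1 hz
  · right
    rw [h2]
    exact count_zero_sum_zero ℓ N c2 d2 (by omega)

lemma aq_eq (ℓ : ℕ → ℕ) (n : ℕ) : aq ℓ n = 1 / 2 ^ n + ((-1 : ℤ) : ℚ) * eps ℓ n := by
  unfold aq; push_cast; ring

lemma bq_eq (ℓ : ℕ → ℕ) (n : ℕ) : bq ℓ n = 1 / 2 ^ n + ((1 : ℤ) : ℚ) * eps ℓ n := by
  unfold bq; push_cast; ring

lemma atom_of_mem_Aset (ℓ : ℕ → ℕ) (hmono : StrictMono ℓ) (hpos : ∀ n, 0 < ℓ n)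
    (hgrow : ∀ n ≥ 1, (2:ℕ)^(n+1) < 3^(ℓ n - ℓ (n-1)))
    (q : ℚ) (hq : q ∈ Aset ℓ) (h : q ∈ AddSubmonoid.closure (Aset ℓ)) :
    IsAddAtom (⟨q, h⟩ : AddSubmonoid.closure (Aset ℓ)) := by
  obtain ⟨n, hn, hab⟩ := hq
  have hqpos : 0 < q := by
    rcases hab with rfl | rfl
    · exact aq_pos ℓ hpos n hn
    · exact bq_pos ℓ hpos n hn
  constructor
  · rw [unit_iff ℓ hpos]
    exact ne_of_gt hqpos
  · intro x y hxy
    by_contra hcon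
    push_neg at hcon
    obtain ⟨hux, huy⟩ := hcon
    have hx0 : (x : ℚ) ≠ 0 := fun h0 => hux ((unit_iff ℓ hpos x).2 h0)
    have hy0 : (y : ℚ) ≠ 0 := fun h0 => huy ((unit_iff ℓ hpos y).2 h0)
    have hsum : (x : ℚ) + (y : ℚ) = q := by
      have := congrArg Subtype.val hxy
      simpa using this.symm
    have hrx := mem_rep ℓ x x.2
    have hry := mem_rep ℓ y y.2
    have : (x : ℚ) = 0 ∨ (y : ℚ) = 0 := by
      rcases hab with rfl | rfl
      · exact no_split ℓ hmono hpos hgrow n hn (-1) (Or.inr rfl) _ _ hrx hry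
          (by rw [hsum, aq_eq])
      · exact no_split ℓ hmono hpos hgrow n hn 1 (Or.inl rfl) _ _ hrx hry
          (by rw [hsum, bq_eq])
    tauto

lemma mem_Aset_of_atom (ℓ : ℕ → ℕ) (hmono : StrictMono ℓ) (hpos : ∀ n, 0 < ℓ n)
    (hgrow : ∀ n ≥ 1, (2:ℕ)^(n+1) < 3^(ℓ n - ℓ (n-1)))
    (q : ℚ) (h : q ∈ AddSubmonoid.closure (Aset ℓ))
    (hat : IsAddAtom (⟨q, h⟩ : AddSubmonoid.closure (Aset ℓ))) : q ∈ Aset ℓ := by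
  obtain ⟨N, c, d, hc0, hd0, hsupp, hq⟩ := mem_rep ℓ q h
  have hq0 : q ≠ 0 := by
    intro h0
    exact hat.1 ((unit_iff ℓ hpos _).2 h0)
  have hex : ∃ k ∈ range (N+1), c k + d k ≠ 0 := by
    by_contra hall
    push_neg at hall
    apply hq0
    rw [hq]
    apply count_zero_sum_zero ℓ N c d
    exact Finset.sum_eq_zero hall
  obtain ⟨k, hkmem, hk⟩ := hex
  have hk1 : 1 ≤ k := by
    rcases Nat.eq_zero_or_pos k with rfl | h'
    · omega
    · exact h'
  -- the element we split off : aq if c k ≠ 0, else bq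
  rcases Nat.eq_zero_or_pos (c k) with hck | hck
  · -- d k ≥ 1, split off bq ℓ k
    have hdk : 1 ≤ d k := by omega
    set d' : ℕ → ℕ := fun j => if j = k then d k - 1 else d j with hd'
    have hr : q = bq ℓ k + ∑ j ∈ range (N+1), ((c j : ℚ) * aq ℓ j + (d' j : ℚ) * bq ℓ j) := by
      rw [hq]
      have hdiff : ∑ j ∈ range (N+1), ((c j : ℚ) * aq ℓ j + (d j : ℚ) * bq ℓ j)
          - ∑ j ∈ range (N+1), ((c j : ℚ) * aq ℓ j + (d' j : ℚ) * bq ℓ j)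
          = bq ℓ k := by
        rw [← Finset.sum_sub_distrib]
        have : ∀ j ∈ range (N+1), ((c j : ℚ) * aq ℓ j + (d j : ℚ) * bq ℓ j)
            - ((c j : ℚ) * aq ℓ j + (d' j : ℚ) * bq ℓ j)
            = if j = k then bq ℓ k else 0 := by
          intro j _
          by_cases hj : j = k
          · subst hj
            simp only [hd', if_pos rfl]
            rw [Nat.cast_sub hdk]
            push_cast
            ring
          · simp only [hd', if_neg hj]
            ring
        rw [Finset.sum_congr rfl this, Finset.sum_ite_eq' (range (N+1)) k (fun _ => bq ℓ k),
          if_pos hkmem]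
      linarith
    have hrmem : ∑ j ∈ range (N+1), ((c j : ℚ) * aq ℓ j + (d' j : ℚ) * bq ℓ j)
        ∈ AddSubmonoid.closure (Aset ℓ) :=
      rep_mem ℓ N c d' hc0 (by simp only [hd']; rw [if_neg (by omega)]; exact hd0)
    have hbmem : bq ℓ k ∈ AddSubmonoid.closure (Aset ℓ) :=
      AddSubmonoid.subset_closure (show bq ℓ k ∈ Aset ℓ from ⟨k, hk1, Or.inr rfl⟩)
    have := hat.2 ⟨bq ℓ k, hbmem⟩ ⟨_, hrmem⟩ (Subtype.ext hr)
    rcases this with hu | hu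
    · exfalso
      have := (unit_iff ℓ hpos _).1 hu
      simp only at this
      have := bq_pos ℓ hpos k hk1
      linarith
    · have hr0 : ∑ j ∈ range (N+1), ((c j : ℚ) * aq ℓ j + (d' j : ℚ) * bq ℓ j) = 0 :=
        (unit_iff ℓ hpos _).1 hu
      rw [hr0, add_zero] at hr
      exact ⟨k, hk1, Or.inr hr⟩
  · -- c k ≥ 1, split off aq ℓ k
    set c' : ℕ → ℕ := fun j => if j = k then c k - 1 else c j with hc'
    have hr : q = aq ℓ k + ∑ j ∈ range (N+1), ((c' j : ℚ) * aq ℓ j + (d j : ℚ) * bq ℓ j) := by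
      rw [hq]
      have hdiff : ∑ j ∈ range (N+1), ((c j : ℚ) * aq ℓ j + (d j : ℚ) * bq ℓ j)
          - ∑ j ∈ range (N+1), ((c' j : ℚ) * aq ℓ j + (d j : ℚ) * bq ℓ j)
          = aq ℓ k := by
        rw [← Finset.sum_sub_distrib]
        have : ∀ j ∈ range (N+1), ((c j : ℚ) * aq ℓ j + (d j : ℚ) * bq ℓ j)
            - ((c' j : ℚ) * aq ℓ j + (d j : ℚ) * bq ℓ j)
            = if j = k then aq ℓ k else 0 := by
          intro j _
          by_cases hj : j = k
          · subst hj
            simp only [hc', if_pos rfl]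
            rw [Nat.cast_sub hck]
            push_cast
            ring
          · simp only [hc', if_neg hj]
            ring
        rw [Finset.sum_congr rfl this, Finset.sum_ite_eq' (range (N+1)) k (fun _ => aq ℓ k),
          if_pos hkmem]
      linarith
    have hrmem : ∑ j ∈ range (N+1), ((c' j : ℚ) * aq ℓ j + (d j : ℚ) * bq ℓ j)
        ∈ AddSubmonoid.closure (Aset ℓ) :=
      rep_mem ℓ N c' d (by simp only [hc']; rw [if_neg (by omega)]; exact hc0) hd0
    have hamem : aq ℓ k ∈ AddSubmonoid.closure (Aset ℓ) :=
      AddSubmonoid.subset_closure (show aq ℓ k ∈ Aset ℓ from ⟨k, hk1, Or.inl rfl⟩)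
    have := hat.2 ⟨aq ℓ k, hamem⟩ ⟨_, hrmem⟩ (Subtype.ext hr)
    rcases this with hu | hu
    · exfalso
      have := (unit_iff ℓ hpos _).1 hu
      simp only at this
      have := aq_pos ℓ hpos k hk1
      linarith
    · have hr0 : ∑ j ∈ range (N+1), ((c' j : ℚ) * aq ℓ j + (d j : ℚ) * bq ℓ j) = 0 :=
        (unit_iff ℓ hpos _).1 hu
      rw [hr0, add_zero] at hr
      exact ⟨k, hk1, Or.inl hr⟩

lemma mem_multiset (ℓ : ℕ → ℕ) (q : ℚ) (h : q ∈ AddSubmonoid.closure (Aset ℓ)) :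
    ∃ l : Multiset ℚ, (∀ x ∈ l, x ∈ Aset ℓ) ∧ l.sum = q := by
  induction h using AddSubmonoid.closure_induction with
  | mem x hx => exact ⟨{x}, by simpa using hx, by simp⟩
  | zero => exact ⟨0, by simp, rfl⟩
  | add x y hx hy ihx ihy =>
    obtain ⟨l1, hl1, hs1⟩ := ihx
    obtain ⟨l2, hl2, hs2⟩ := ihy
    refine ⟨l1 + l2, ?_, by rw [Multiset.sum_add, hs1, hs2]⟩
    intro z hz
    rcases Multiset.mem_add.1 hz with h' | h'
    · exact hl1 z h'
    · exact hl2 z h'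


end AtomsAux

theorem atomic_with_atoms_A (ℓ : ℕ → ℕ) (hmono : StrictMono ℓ) (hpos : ∀ n, 0 < ℓ n)
    (hgrow : ∀ n ≥ 1, (2 : ℕ) ^ (n + 1) < 3 ^ (ℓ n - ℓ (n - 1)))
    (a b : ℕ → ℚ)
    (ha : ∀ n, a n = ((2 ^ n * 3 ^ (ℓ n) - 1) : ℚ) / (2 ^ (2 * n) * 3 ^ (ℓ n)))
    (hb : ∀ n, b n = ((2 ^ n * 3 ^ (ℓ n) + 1) : ℚ) / (2 ^ (2 * n) * 3 ^ (ℓ n)))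
    (A : Set ℚ) (hA : A = {q : ℚ | ∃ n : ℕ, 1 ≤ n ∧ (q = a n ∨ q = b n)})
    (M : AddSubmonoid ℚ) (hM : M = AddSubmonoid.closure A) :
    AddAtomic M ∧ ∀ q : ℚ, (∃ h : q ∈ M, IsAddAtom (⟨q, h⟩ : M)) ↔ q ∈ A := by
  have haq : ∀ k, a k = AtomsAux.aq ℓ k := by
    intro k
    rw [ha k]
    unfold AtomsAux.aq AtomsAux.eps
    have h2 : (2:ℚ)^(2*k) = 2^k * 2^k := by rw [two_mul, pow_add]
    have hne1 : (2:ℚ)^k ≠ 0 := by positivity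
    have hne2 : (3:ℚ)^(ℓ k) ≠ 0 := by positivity
    rw [h2]
    field_simp
  have hbq : ∀ k, b k = AtomsAux.bq ℓ k := by
    intro k
    rw [hb k]
    unfold AtomsAux.bq AtomsAux.eps
    have h2 : (2:ℚ)^(2*k) = 2^k * 2^k := by rw [two_mul, pow_add]
    have hne1 : (2:ℚ)^k ≠ 0 := by positivity
    have hne2 : (3:ℚ)^(ℓ k) ≠ 0 := by positivity
    rw [h2]
    field_simp
  have hA' : A = AtomsAux.Aset ℓ := by
    rw [hA]
    ext q
    simp only [Set.mem_setOf_eq, AtomsAux.Aset, haq, hbq]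
  subst hM
  rw [hA']
  constructor
  · -- atomicity
    intro x _
    obtain ⟨l, hl, hsum⟩ := AtomsAux.mem_multiset ℓ x.1 x.2
    refine ⟨l.attach.map (fun z =>
      (⟨z.1, AddSubmonoid.subset_closure (hl z.1 z.2)⟩ :
        AddSubmonoid.closure (AtomsAux.Aset ℓ))), ?_, ?_⟩
    · intro a' ha'
      obtain ⟨z, hz, rfl⟩ := Multiset.mem_map.1 ha'
      exact AtomsAux.atom_of_mem_Aset ℓ hmono hpos hgrow z.1 (hl z.1 z.2) _
    · apply Subtype.ext
      have h1 := AddMonoidHom.map_multiset_sum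
        ((AddSubmonoid.closure (AtomsAux.Aset ℓ)).subtype)
        (l.attach.map (fun z =>
          (⟨z.1, AddSubmonoid.subset_closure (hl z.1 z.2)⟩ :
            AddSubmonoid.closure (AtomsAux.Aset ℓ))))
      simp only [AddSubmonoid.coe_subtype, Multiset.map_map, Function.comp] at h1
      rw [← hsum]
      refine h1.trans ?_
      simp
  · intro q
    constructor
    · rintro ⟨h, hat⟩
      exact AtomsAux.mem_Aset_of_atom ℓ hmono hpos hgrow q h hat
    · intro hq
      exact ⟨AddSubmonoid.subset_closure hq,
        AtomsAux.atom_of_mem_Aset ℓ hmono hpos hgrow q hq _⟩
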